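/- For a graph Γ, the action α: (A⁺_Γ)_c ↷ A⁺_Γ/∼ (a·[s] := [as]) is almost free (every nontrivial core element has at most finitely many fixed classes) if and only if either Γ has no universal vertex, or every vertex of Γ is universal (i.e., A⁺_Γ is the free abelian monoid on V). -/

import Mathlib

section RightLCMBasics
variable (S : Type*) [Monoid S]

/-- The principal right ideal `sS`. -/
def pIdeal {S : Type*} [Monoid S] (s : S) : Set S := Set.range (fun r => s * r)

/-- `s ⊥ t` : the principal right ideals are disjoint. -/
def Orth {S : Type*} [Monoid S] (s t : S) : Prop := pIdeal s ∩ pIdeal t = ∅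

/-- Left cancellativity. -/
def LeftCancellative : Prop := ∀ a b c : S, a * b = a * c → b = c

/-- Right LCM property: intersections of principal right ideals are empty or principal. -/
def IsRightLCM : Prop :=
  ∀ s t : S, pIdeal s ∩ pIdeal t = ∅ ∨ ∃ r : S, pIdeal s ∩ pIdeal t = pIdeal r

/-- The core subsemigroup `S_c`. -/
def core : Set S := {a | ∀ s : S, ¬ Orth a s}

/-- The core relation `s ∼ t` : `sa = tb` for some core elements `a, b`. -/
def coreRel {S : Type*} [Monoid S] (s t : S) : Prop :=
  ∃ a ∈ core S, ∃ b ∈ core S, s * a = t * b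

/-- A (finite) foundation set. -/
def IsFoundationSet {S : Type*} [Monoid S] (F : Set S) : Prop :=
  F.Finite ∧ ∀ s : S, ∃ f ∈ F, ¬ Orth f s

/-- Accuracy: distinct elements are mutually orthogonal. -/
def Accurate {S : Type*} [Monoid S] (F : Set S) : Prop :=
  ∀ f ∈ F, ∀ g ∈ F, f ≠ g → Orth f g

/-- Property (AR): every foundation set admits an accurate refinement. -/
def HasAR : Prop :=
  ∀ F : Set S, IsFoundationSet F →
    ∃ F' : Set S, IsFoundationSet F' ∧ Accurate F' ∧
      F' ⊆ {x | ∃ f ∈ F, ∃ r : S, x = f * r}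

end RightLCMBasics

/-- The congruence on the free monoid on the vertices implementing the right-angled
Artin relations. -/
def raamCon {V : Type*} (G : SimpleGraph V) : Con (FreeMonoid V) :=
  conGen (fun x y => ∃ v w : V, G.Adj v w ∧
    x = FreeMonoid.of v * FreeMonoid.of w ∧ y = FreeMonoid.of w * FreeMonoid.of v)

/-- The right-angled Artin monoid of a graph. -/
def RAAM {V : Type*} (G : SimpleGraph V) := (raamCon G).Quotient

instance {V : Type*} (G : SimpleGraph V) : Monoid (RAAM G) :=
  inferInstanceAs (Monoid (raamCon G).Quotient)

/-- The generator of `RAAM G` associated to a vertex. -/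
def agen {V : Type*} (G : SimpleGraph V) (v : V) : RAAM G := (raamCon G).mk' (FreeMonoid.of v)

-- AUX
namespace RaamAux

variable {V : Type*}

def raamLift (G : SimpleGraph V) {M : Type*} [Monoid M] (f : V → M)
    (hf : ∀ v w, G.Adj v w → f v * f w = f w * f v) : RAAM G →* M :=
  Con.lift (raamCon G) (FreeMonoid.lift f) (Con.conGen_le.mpr (by
    rintro x y ⟨v, w, hadj, rfl, rfl⟩
    simp only [Con.ker_rel, map_mul, FreeMonoid.lift_eval_of]
    exact hf v w hadj))

lemma raamLift_mk' (G : SimpleGraph V) {M : Type*} [Monoid M] (f : V → M)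
    (hf : ∀ v w, G.Adj v w → f v * f w = f w * f v) (l : FreeMonoid V) :
    raamLift G f hf ((raamCon G).mk' l) = FreeMonoid.lift f l :=
  Con.lift_mk' _ l

/-- The quotient map, as a hom into `RAAM G`. -/
def mkH (G : SimpleGraph V) : FreeMonoid V →* RAAM G := (raamCon G).mk'

lemma mkH_surjective (G : SimpleGraph V) : Function.Surjective (mkH G) :=
  Con.mk'_surjective

lemma raamLift_mkH (G : SimpleGraph V) {M : Type*} [Monoid M] (f : V → M)
    (hf : ∀ v w, G.Adj v w → f v * f w = f w * f v) (l : FreeMonoid V) :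
    raamLift G f hf (mkH G l) = FreeMonoid.lift f l :=
  Con.lift_mk' _ l

open Classical in
noncomputable def piFun (u w : V) : V → FreeMonoid Bool := fun x =>
  if x = u then FreeMonoid.of false else if x = w then FreeMonoid.of true else 1

lemma piFun_comm (G : SimpleGraph V) (u w : V) (hnadj : ¬ G.Adj u w) :
    ∀ v x, G.Adj v x → piFun u w v * piFun u w x = piFun u w x * piFun u w v := by
  intro v x hadj
  have fvalu : ∀ y, y = u → piFun u w y = FreeMonoid.of false := by
    intro y hy; simp only [piFun]; rw [if_pos hy]
  have fvalw : ∀ y, y ≠ u → y = w → piFun u w y = FreeMonoid.of true := by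
    intro y hy hy'; simp only [piFun]; rw [if_neg hy, if_pos hy']
  have fval1 : ∀ y, y ≠ u → y ≠ w → piFun u w y = 1 := by
    intro y hy hy'; simp only [piFun]; rw [if_neg hy, if_neg hy']
  by_cases hvu : v = u
  · by_cases hxu : x = u
    · rw [fvalu v hvu, fvalu x hxu]
    · by_cases hxw : x = w
      · exact absurd (by rw [← hvu, ← hxw]; exact hadj) hnadj
      · rw [fval1 x hxu hxw, mul_one, one_mul]
  · by_cases hvw : v = w
    · by_cases hxu : x = u
      · refine absurd ?_ hnadj
        have h2 := hadj.symm
        rw [hxu, hvw] at h2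
        exact h2
      · by_cases hxw : x = w
        · rw [fvalw v hvu hvw, fvalw x hxu hxw]
        · rw [fval1 x hxu hxw, mul_one, one_mul]
    · rw [fval1 v hvu hvw, mul_one, one_mul]

noncomputable def piHom (G : SimpleGraph V) (u w : V) (hnadj : ¬ G.Adj u w) : RAAM G →* FreeMonoid Bool :=
  raamLift G (piFun u w) (piFun_comm G u w hnadj)

lemma piHom_mk' (G : SimpleGraph V) (u w : V) (hnadj : ¬ G.Adj u w) (l : FreeMonoid V) :
    piHom G u w hnadj (mkH G l) = FreeMonoid.lift (piFun u w) l :=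
  raamLift_mkH G _ _ l

lemma piHom_agen_u (G : SimpleGraph V) (u w : V) (hnadj : ¬ G.Adj u w) :
    piHom G u w hnadj (agen G u) = FreeMonoid.of false := by
  rw [show agen G u = mkH G (FreeMonoid.of u) from rfl, piHom_mk',
    FreeMonoid.lift_eval_of]
  simp [piFun]

lemma piHom_agen_w (G : SimpleGraph V) (u w : V) (hnadj : ¬ G.Adj u w) (hwu : w ≠ u) :
    piHom G u w hnadj (agen G w) = FreeMonoid.of true := by
  rw [show agen G w = mkH G (FreeMonoid.of w) from rfl, piHom_mk',
    FreeMonoid.lift_eval_of]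
  simp [piFun, hwu]

lemma mem_false_lift (u w : V) (l : FreeMonoid V) (hu : u ∈ l.toList) :
    false ∈ (FreeMonoid.lift (piFun u w) l).toList := by
  induction l using FreeMonoid.inductionOn' with
  | one => simp [FreeMonoid.toList_one] at hu
  | of_mul x xs ih =>
    rw [map_mul, FreeMonoid.toList_mul, List.mem_append]
    rw [FreeMonoid.toList_mul, FreeMonoid.toList_of] at hu
    rcases List.mem_cons.mp hu with h | h
    · left
      subst h
      rw [FreeMonoid.lift_eval_of]
      simp [piFun]
    · right; exact ih h

lemma piHom_core_eq_one (G : SimpleGraph V) (u w : V) (hnadj : ¬ G.Adj u w) (hwu : w ≠ u)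
    {a : RAAM G} (ha : a ∈ core (RAAM G)) : piHom G u w hnadj a = 1 := by
  by_contra h
  have hnil : (piHom G u w hnadj a).toList ≠ [] := by
    intro hl
    exact h (FreeMonoid.toList.injective (by rw [hl, FreeMonoid.toList_one]))
  obtain ⟨c, tl, hc⟩ := List.exists_cons_of_ne_nil hnil
  have key : ∀ s : RAAM G, piHom G u w hnadj s = FreeMonoid.of (!c) → False := by
    intro s hπs
    refine ha s ?_
    apply Set.eq_empty_iff_forall_notMem.mpr
    rintro z ⟨⟨r, hr⟩, ⟨r', hr'⟩⟩
    have heq : a * r = s * r' := hr.trans hr'.symm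
    have h2 := congrArg (fun q => (piHom G u w hnadj q).toList) heq
    simp only [map_mul, FreeMonoid.toList_mul] at h2
    rw [hc, hπs, FreeMonoid.toList_of, List.cons_append, List.singleton_append] at h2
    have := (List.cons.injEq _ _ _ _).mp h2 |>.1
    simp at this
  cases c
  · exact key (agen G w) (piHom_agen_w G u w hnadj hwu)
  · exact key (agen G u) (piHom_agen_u G u w hnadj)

lemma agen_central (G : SimpleGraph V) {v : V} (hv : ∀ w, w ≠ v → G.Adj v w) :
    ∀ t : RAAM G, agen G v * t = t * agen G v := by
  intro t
  obtain ⟨m, rfl⟩ := mkH_surjective G t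
  induction m using FreeMonoid.inductionOn' with
  | one => rw [map_one, mul_one, one_mul]
  | of_mul x xs ih =>
    rw [map_mul]
    have hx : agen G v * mkH G (FreeMonoid.of x)
        = mkH G (FreeMonoid.of x) * agen G v := by
      by_cases hxv : x = v
      · subst hxv; rfl
      · show mkH G (FreeMonoid.of v) * mkH G (FreeMonoid.of x)
            = mkH G (FreeMonoid.of x) * mkH G (FreeMonoid.of v)
        rw [← map_mul, ← map_mul]
        exact (Con.eq _).mpr (ConGen.Rel.of _ _ ⟨v, x, hv x hxv, rfl, rfl⟩)
    rw [← mul_assoc, hx, mul_assoc, ih, ← mul_assoc]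

lemma raam_comm (G : SimpleGraph V) (hall : ∀ v w : V, w ≠ v → G.Adj v w) (s t : RAAM G) :
    s * t = t * s := by
  obtain ⟨l, rfl⟩ := mkH_surjective G s
  induction l using FreeMonoid.inductionOn' with
  | one => rw [map_one, mul_one, one_mul]
  | of_mul x xs ih =>
    rw [map_mul, mul_assoc, ih, ← mul_assoc,
      show mkH G (FreeMonoid.of x) * t = t * mkH G (FreeMonoid.of x) from
        agen_central G (fun w hw => hall x w hw) t, mul_assoc]

lemma one_mem_core {S : Type*} [Monoid S] : (1 : S) ∈ core S := by
  intro s hOrth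
  have hmem : s ∈ pIdeal (1 : S) ∩ pIdeal s := ⟨⟨s, one_mul s⟩, ⟨1, mul_one s⟩⟩
  rw [hOrth] at hmem
  exact hmem

lemma central_mem_core {S : Type*} [Monoid S] {a : S} (hc : ∀ t, a * t = t * a) :
    a ∈ core S := by
  intro s hOrth
  have hmem : a * s ∈ pIdeal a ∩ pIdeal s := ⟨⟨s, rfl⟩, ⟨a, (hc s).symm⟩⟩
  rw [hOrth] at hmem
  exact hmem

lemma pow_of_false_injective : Function.Injective (fun n : ℕ => (FreeMonoid.of false) ^ n) := by
  intro n m h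
  have h2 := congrArg (FreeMonoid.lift (fun _ : Bool => Multiplicative.ofAdd (1 : ℕ))) h
  simp only [map_pow, FreeMonoid.lift_eval_of] at h2
  have h3 := congrArg Multiplicative.toAdd h2
  simp only [toAdd_pow, toAdd_ofAdd, smul_eq_mul, mul_one] at h3
  exact h3

lemma agen_ne_one (G : SimpleGraph V) (v : V) : agen G v ≠ 1 := by
  intro h
  have h1 : raamLift G (fun _ : V => Multiplicative.ofAdd (1 : ℕ)) (fun _ _ _ => mul_comm _ _)
      (agen G v) = Multiplicative.ofAdd 1 := by
    rw [show agen G v = mkH G (FreeMonoid.of v) from rfl, raamLift_mkH, FreeMonoid.lift_eval_of]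
  rw [h, map_one] at h1
  have h2 := congrArg Multiplicative.toAdd h1
  simp only [toAdd_one, toAdd_ofAdd] at h2
  exact zero_ne_one h2

end RaamAux

open RaamAux in
/-- Corollary 3.4(v): the action of the core of `A⁺_Γ` on core classes is almost free
iff `Γ` has no universal vertex or every vertex of `Γ` is universal. -/
theorem raam_core_action_almost_free {V : Type*} [Countable V] (G : SimpleGraph V) :
    (∀ a ∈ core (RAAM G), a ≠ 1 →
        ∃ T : Set (RAAM G), T.Finite ∧ ∀ s : RAAM G, coreRel (a * s) s → ∃ t ∈ T, coreRel s t) ↔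
      ((¬ ∃ v : V, ∀ w : V, w ≠ v → G.Adj v w) ∨ (∀ v w : V, w ≠ v → G.Adj v w)) := by
  constructor
  · intro H
    by_contra hcon
    push_neg at hcon
    obtain ⟨⟨v, hv⟩, u, w, hwu, hnadj⟩ := hcon
    have hcen := agen_central G hv
    have hamem : agen G v ∈ core (RAAM G) := central_mem_core hcen
    obtain ⟨T, hTfin, hT⟩ := H (agen G v) hamem (agen_ne_one G v)
    have hch : ∀ n : ℕ, ∃ t ∈ T, coreRel ((agen G u) ^ n) t := by
      intro n
      apply hT
      exact ⟨1, one_mem_core, agen G v, hamem, by rw [mul_one]; exact hcen _⟩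
    set f : ℕ → RAAM G := fun n => (hch n).choose with hf
    have hmem : ∀ n, f n ∈ T := fun n => (hch n).choose_spec.1
    have hπ : ∀ n, piHom G u w hnadj (f n) = (FreeMonoid.of false) ^ n := by
      intro n
      obtain ⟨x, hx, y, hy, heq⟩ := (hch n).choose_spec.2
      have h2 := congrArg (piHom G u w hnadj) heq
      rw [map_mul, map_mul, piHom_core_eq_one G u w hnadj hwu hx,
        piHom_core_eq_one G u w hnadj hwu hy, mul_one, mul_one, map_pow,
        piHom_agen_u G u w hnadj] at h2
      exact h2.symm
    have hinj : Function.Injective f := by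
      intro n m hnm
      apply pow_of_false_injective
      show FreeMonoid.of false ^ n = FreeMonoid.of false ^ m
      rw [← hπ n, ← hπ m, hnm]
    exact (Set.infinite_of_injective_forall_mem hinj hmem) hTfin
  · rintro (hno | hall) a ha hane
    · exfalso
      obtain ⟨l, rfl⟩ := mkH_surjective G a
      have hl : l.toList ≠ [] := by
        intro h0
        apply hane
        have hl1 : l = 1 := FreeMonoid.toList.injective (by rw [h0, FreeMonoid.toList_one])
        rw [hl1, map_one]
      obtain ⟨v, tl, hvl⟩ := List.exists_cons_of_ne_nil hl
      push_neg at hno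
      obtain ⟨w, hwv, hnadj⟩ := hno v
      have h1 := piHom_core_eq_one G v w hnadj hwv ha
      have h2 : false ∈ (piHom G v w hnadj (mkH G l)).toList := by
        rw [piHom_mk']
        exact mem_false_lift v w l (by rw [hvl]; exact List.mem_cons_self)
      rw [h1, FreeMonoid.toList_one] at h2
      exact List.not_mem_nil h2
    · refine ⟨{1}, Set.finite_singleton 1, fun s _ => ⟨1, Set.mem_singleton 1, ?_⟩⟩
      exact ⟨1, one_mem_core, s, central_mem_core (fun t => raam_comm G hall s t),
        by rw [mul_one, one_mul]⟩
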